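/- Let $\{\omega_j\}_{j=0}^{n}$ be real numbers with $\omega_0 > 0$, $\omega_j \le 0$ for all $1 \le j \le n$, and $\sum_{j=0}^{n} \omega_j \ge 0$. Then for any vectors $x_0, x_1, \dots, x_n$ in a real inner product space, $\sum_{j=0}^{n} \omega_{n-j} \|x_j\|^2 \le 2 \langle x_n, \sum_{j=0}^{n} \omega_{n-j} x_j \rangle$. -/

import Mathlib

theorem discrete_energy_inequality {E : Type*} [NormedAddCommGroup E] [InnerProductSpace ℝ E]
    (n : ℕ) (ω : ℕ → ℝ) (hω0 : 0 < ω 0)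
    (hωneg : ∀ j, 1 ≤ j → j ≤ n → ω j ≤ 0)
    (hsum : 0 ≤ ∑ j ∈ Finset.range (n + 1), ω j)
    (x : ℕ → E) :
    ∑ j ∈ Finset.range (n + 1), ω (n - j) * ‖x j‖ ^ 2
      ≤ 2 * (inner ℝ (x n) (∑ j ∈ Finset.range (n + 1), ω (n - j) • x j) : ℝ) := by
  rw [inner_sum]
  simp_rw [real_inner_smul_right]
  rw [Finset.mul_sum, ← sub_nonneg, ← Finset.sum_sub_distrib]
  have hcong : ∀ j ∈ Finset.range (n + 1),
      2 * (ω (n - j) * (inner ℝ (x n) (x j) : ℝ)) - ω (n - j) * ‖x j‖ ^ 2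
        = ω (n - j) * ‖x n‖ ^ 2 - ω (n - j) * ‖x n - x j‖ ^ 2 := by
    intro j _
    have h : ‖x n - x j‖ ^ 2
        = ‖x n‖ ^ 2 - 2 * (inner ℝ (x n) (x j) : ℝ) + ‖x j‖ ^ 2 := by
      exact norm_sub_sq_real _ _
    rw [h]; ring
  rw [Finset.sum_congr rfl hcong, Finset.sum_sub_distrib, ← Finset.sum_mul]
  have hs : ∑ j ∈ Finset.range (n + 1), ω (n - j) = ∑ j ∈ Finset.range (n + 1), ω j := by
    have := Finset.sum_range_reflect (fun j => ω j) (n + 1)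
    simpa using this
  have h1 : 0 ≤ (∑ j ∈ Finset.range (n + 1), ω (n - j)) * ‖x n‖ ^ 2 := by
    apply mul_nonneg (by rw [hs]; exact hsum) (by positivity)
  have h2 : ∑ j ∈ Finset.range (n + 1), ω (n - j) * ‖x n - x j‖ ^ 2 ≤ 0 := by
    apply Finset.sum_nonpos
    intro j hj
    rcases eq_or_lt_of_le (Nat.lt_succ_iff.mp (Finset.mem_range.mp hj)) with h | h
    · simp [h]
    · have : ω (n - j) ≤ 0 := hωneg _ (by omega) (by omega)
      exact mul_nonpos_of_nonpos_of_nonneg this (by positivity)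
  linarith
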